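/- Let ν ∈ ρΛ° for some ρ with 0 < ρ ≤ 1/χ and ρ < 1, where χ is the interference degree of G, and let λ be a vector of fugacities such that the stationary service rate equals the arrival rate at every link, i.e., s_i(λ) = ν_i for all i. Then λ_i ≤ ρ/(1−ρ) for every i. -/

import Mathlib

open Finset

variable {V : Type*} [Fintype V] [DecidableEq V]

/-- A finite set of vertices is independent in `G`. -/
def IsInd (G : SimpleGraph V) [DecidableRel G.Adj] (s : Finset V) : Prop :=
  ∀ v ∈ s, ∀ w ∈ s, ¬ G.Adj v w

instance (G : SimpleGraph V) [DecidableRel G.Adj] (s : Finset V) :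
    Decidable (IsInd G s) := by
  unfold IsInd; infer_instance

/-- The indicator vector of a finite set of vertices. -/
def indVec (s : Finset V) : V → ℝ := fun v => if v ∈ s then 1 else 0

/-- The set `Ω` of feasible schedules, as indicator vectors of independent sets. -/
def schedSet (G : SimpleGraph V) [DecidableRel G.Adj] : Set (V → ℝ) :=
  {x | ∃ s : Finset V, IsInd G s ∧ x = indVec s}

/-- `Co(Ω)`: the convex hull of the feasible schedules. -/
def coSched (G : SimpleGraph V) [DecidableRel G.Adj] : Set (V → ℝ) :=
  convexHull ℝ (schedSet G)

/-- The capacity region `Λ° = {ν ≥ 0 : ∃ μ ∈ Co(Ω), ν < μ}`. -/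
def capIntr (G : SimpleGraph V) [DecidableRel G.Adj] : Set (V → ℝ) :=
  {ν | (∀ i, 0 ≤ ν i) ∧ ∃ μ ∈ coSched G, ∀ i, ν i < μ i}

/-- `Λ = {ν ≥ 0 : ν ∈ Co(Ω)}`. -/
def capCl (G : SimpleGraph V) [DecidableRel G.Adj] : Set (V → ℝ) :=
  {ν | (∀ i, 0 ≤ ν i) ∧ ν ∈ coSched G}

/-- The product-form distribution on independent sets with fugacities `lam`. -/
noncomputable def prodForm (G : SimpleGraph V) [DecidableRel G.Adj]
    (lam : V → ℝ) (σ : Finset V) : ℝ :=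
  if IsInd G σ then
    (∏ v ∈ σ, lam v) / (∑ σ' ∈ univ.filter (fun s => IsInd G s), ∏ v ∈ σ', lam v)
  else 0

/-- The stationary service rate of link `i` under the product-form distribution. -/
noncomputable def serviceRate (G : SimpleGraph V) [DecidableRel G.Adj]
    (lam : V → ℝ) (i : V) : ℝ :=
  ∑ σ ∈ univ.filter (fun s : Finset V => i ∈ s), prodForm G lam σ

/-- The concave function `F(r;ν) = Σ_i ν_i r_i − log Σ_{σ∈Ω} exp(Σ_{i∈σ} r_i)`. -/
noncomputable def Ffun (G : SimpleGraph V) [DecidableRel G.Adj]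
    (r ν : V → ℝ) : ℝ :=
  ∑ i : V, ν i * r i -
    Real.log (∑ σ ∈ univ.filter (fun s => IsInd G s), Real.exp (∑ i ∈ σ, r i))

/-- The interference degree of a vertex: the maximum number of members of its
neighborhood that can be simultaneously active (i.e. the maximum size of an
independent subset of its neighborhood). -/
def intDeg (G : SimpleGraph V) [DecidableRel G.Adj] (i : V) : ℕ :=
  (((G.neighborFinset i).powerset.filter (fun s => IsInd G s)).sup Finset.card)

/-- The interference degree of the graph. -/
def intDegG (G : SimpleGraph V) [DecidableRel G.Adj] : ℕ :=
  univ.sup (intDeg G)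

section MyAux

variable (G : SimpleGraph V) [DecidableRel G.Adj] (lam : V → ℝ)

noncomputable def myZ : ℝ :=
  ∑ σ ∈ univ.filter (fun s : Finset V => IsInd G s), ∏ v ∈ σ, lam v

noncomputable def myA (j : V) : ℝ :=
  ∑ σ ∈ univ.filter (fun s : Finset V => IsInd G s),
    if j ∈ σ then ∏ v ∈ σ, lam v else 0

noncomputable def myQ (i : V) : ℝ :=
  ∑ σ ∈ univ.filter (fun s : Finset V => IsInd G s),
    if ∀ j ∈ insert i (G.neighborFinset i), j ∉ σ then ∏ v ∈ σ, lam v else 0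

lemma myZ_pos (hlam : ∀ i, 0 < lam i) : 0 < myZ G lam := by
  apply Finset.sum_pos
  · intro σ _; exact Finset.prod_pos (fun v _ => hlam v)
  · exact ⟨∅, by simp only [Finset.mem_filter, Finset.mem_univ, true_and]; simp [IsInd]⟩

lemma myQ_pos (hlam : ∀ i, 0 < lam i) (i : V) : 0 < myQ G lam i := by
  have hmem : (∅ : Finset V) ∈ univ.filter (fun s : Finset V => IsInd G s) := by
    simp only [Finset.mem_filter, Finset.mem_univ, true_and]; simp [IsInd]
  have h := Finset.single_le_sum (f := fun σ : Finset V =>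
      if ∀ j ∈ insert i (G.neighborFinset i), j ∉ σ then ∏ v ∈ σ, lam v else 0)
      (fun σ _ => by
        try simp only
        split
        · exact Finset.prod_nonneg (fun v _ => (hlam v).le)
        · exact le_refl 0) hmem
  simp only [Finset.notMem_empty, not_false_iff, imp_true_iff, if_true,
    Finset.prod_empty] at h
  rw [myQ]
  linarith

lemma serviceRate_eq (j : V) : serviceRate G lam j = myA G lam j / myZ G lam := by
  rw [serviceRate, myA, myZ, Finset.sum_filter, Finset.sum_div, Finset.sum_filter]
  apply Finset.sum_congr rfl
  intro σ _
  by_cases h1 : IsInd G σ <;> by_cases h2 : j ∈ σ <;>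
    simp [prodForm, h1, h2, myZ]

lemma myA_eq (i : V) : myA G lam i = lam i * myQ G lam i := by
  rw [myA, myQ, ← Finset.sum_filter, ← Finset.sum_filter, Finset.mul_sum]
  refine Finset.sum_nbij' (i := fun σ => σ.erase i) (j := fun τ => insert i τ)
    ?_ ?_ ?_ ?_ ?_
  · intro σ hσ
    simp only [Finset.mem_filter, Finset.mem_univ, true_and] at hσ ⊢
    obtain ⟨hind, hiσ⟩ := hσ
    refine ⟨fun v hv w hw => hind v (Finset.mem_of_mem_erase hv) w
      (Finset.mem_of_mem_erase hw), ?_⟩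
    intro j hj hjσ
    rcases Finset.mem_insert.mp hj with rfl | hjN
    · exact Finset.notMem_erase j σ hjσ
    · exact hind i hiσ j (Finset.mem_of_mem_erase hjσ)
        ((SimpleGraph.mem_neighborFinset _ _ _).mp hjN)
  · intro τ hτ
    simp only [Finset.mem_filter, Finset.mem_univ, true_and] at hτ ⊢
    obtain ⟨hind, hτd⟩ := hτ
    have hiτ : i ∉ τ := hτd i (Finset.mem_insert_self _ _)
    refine ⟨?_, Finset.mem_insert_self _ _⟩
    intro v hv w hw
    rcases Finset.mem_insert.mp hv with rfl | hvτ <;>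
      rcases Finset.mem_insert.mp hw with h | hwτ
    · subst h; exact G.irrefl
    · intro hadj
      exact hτd w (Finset.mem_insert_of_mem ((SimpleGraph.mem_neighborFinset _ _ _).mpr hadj)) hwτ
    · subst h
      intro hadj
      exact hτd v (Finset.mem_insert_of_mem
        ((SimpleGraph.mem_neighborFinset _ _ _).mpr (G.adj_symm hadj))) hvτ
    · exact hind v hvτ w hwτ
  · intro σ hσ
    simp only [Finset.mem_filter, Finset.mem_univ, true_and] at hσ
    exact Finset.insert_erase hσ.2
  · intro τ hτ
    simp only [Finset.mem_filter, Finset.mem_univ, true_and] at hτ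
    exact Finset.erase_insert (hτ.2 i (Finset.mem_insert_self _ _))
  · intro σ hσ
    simp only [Finset.mem_filter, Finset.mem_univ, true_and] at hσ
    exact (Finset.mul_prod_erase σ lam hσ.2).symm

lemma myZ_le (hlam : ∀ i, 0 < lam i) (i : V) :
    myZ G lam ≤ myA G lam i + (∑ j ∈ G.neighborFinset i, myA G lam j)
      + myQ G lam i := by
  rw [myZ, myA, myQ]
  rw [show (∑ j ∈ G.neighborFinset i, myA G lam j)
      = ∑ σ ∈ univ.filter (fun s : Finset V => IsInd G s),
          ∑ j ∈ G.neighborFinset i, (if j ∈ σ then ∏ v ∈ σ, lam v else 0)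
    from by rw [Finset.sum_comm]; rfl]
  rw [← Finset.sum_add_distrib, ← Finset.sum_add_distrib]
  apply Finset.sum_le_sum
  intro σ hσ
  have hP : (0:ℝ) ≤ ∏ v ∈ σ, lam v := Finset.prod_nonneg (fun v _ => (hlam v).le)
  by_cases h1 : i ∈ σ
  · have h2 : (0:ℝ) ≤ ∑ j ∈ G.neighborFinset i, (if j ∈ σ then ∏ v ∈ σ, lam v else 0) :=
      Finset.sum_nonneg (fun j _ => by split <;> [exact hP; exact le_refl 0])
    have h3 : (0:ℝ) ≤ if ∀ j ∈ insert i (G.neighborFinset i), j ∉ σ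
        then ∏ v ∈ σ, lam v else 0 := by split <;> [exact hP; exact le_refl 0]
    rw [if_pos h1]
    linarith
  · by_cases h2 : ∀ j ∈ insert i (G.neighborFinset i), j ∉ σ
    · rw [if_neg h1, if_pos h2]
      have h3 : (0:ℝ) ≤ ∑ j ∈ G.neighborFinset i, (if j ∈ σ then ∏ v ∈ σ, lam v else 0) :=
        Finset.sum_nonneg (fun j _ => by split <;> [exact hP; exact le_refl 0])
      linarith
    · push_neg at h2
      obtain ⟨j, hjmem, hjσ⟩ := h2
      have hjN : j ∈ G.neighborFinset i := by
        rcases Finset.mem_insert.mp hjmem with rfl | h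
        · exact absurd hjσ h1
        · exact h
      have h4 : (∏ v ∈ σ, lam v)
          ≤ ∑ j' ∈ G.neighborFinset i, (if j' ∈ σ then ∏ v ∈ σ, lam v else 0) := by
        have := Finset.single_le_sum
          (f := fun j' => if j' ∈ σ then ∏ v ∈ σ, lam v else 0)
          (fun j' _ => by (try simp only); split <;> [exact hP; exact le_refl 0]) hjN
        try simp only at this
        rwa [if_pos hjσ] at this
      have h3 : (0:ℝ) ≤ if ∀ j ∈ insert i (G.neighborFinset i), j ∉ σ
          then ∏ v ∈ σ, lam v else 0 := by split <;> [exact hP; exact le_refl 0]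
      rw [if_neg h1]
      linarith

lemma hull_linear_bound (c : V → ℝ) (B : ℝ)
    (hB : ∀ s : Finset V, IsInd G s → ∑ v ∈ s, c v ≤ B) :
    ∀ μ' ∈ coSched G, ∑ v : V, c v * μ' v ≤ B := by
  have hlin : IsLinearMap ℝ (fun x : V → ℝ => ∑ v : V, c v * x v) := by
    constructor
    · intro x y
      simp [mul_add, Finset.sum_add_distrib]
    · intro t x
      simp only [Pi.smul_apply, smul_eq_mul, Finset.mul_sum]
      apply Finset.sum_congr rfl
      intro v _; ring
  have hconv : Convex ℝ {x : V → ℝ | ∑ v : V, c v * x v ≤ B} :=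
    convex_halfSpace_le hlin B
  intro μ' hμ'
  have hsub : schedSet G ⊆ {x : V → ℝ | ∑ v : V, c v * x v ≤ B} := by
    rintro x ⟨s, hs, rfl⟩
    have heq : ∑ v : V, c v * indVec s v = ∑ v ∈ s, c v := by
      simp only [indVec, mul_ite, mul_one, mul_zero]
      rw [Finset.sum_ite_mem, Finset.univ_inter]
    simp only [Set.mem_setOf_eq, heq]
    exact hB s hs
  exact convexHull_min hsub hconv hμ'

lemma card_inter_le (i : V) (s : Finset V) (hs : IsInd G s) :
    (s ∩ G.neighborFinset i).card ≤ intDegG G := by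
  have h1 : s ∩ G.neighborFinset i ∈
      ((G.neighborFinset i).powerset.filter (fun t => IsInd G t)) := by
    rw [Finset.mem_filter, Finset.mem_powerset]
    exact ⟨Finset.inter_subset_right, fun v hv w hw =>
      hs v (Finset.mem_of_mem_inter_left hv) w (Finset.mem_of_mem_inter_left hw)⟩
  calc (s ∩ G.neighborFinset i).card ≤ intDeg G i := Finset.le_sup h1
    _ ≤ intDegG G := Finset.le_sup (Finset.mem_univ i)

end MyAux

/-- Lemma 2 of the paper: if `ν ∈ ρΛ°` with
`0 < ρ ≤ 1/χ` and `ρ < 1`, and the fugacities `λ` give service rates exactly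
equal to `ν`, then `λ_i ≤ ρ/(1-ρ)` for every link `i`. -/
theorem fugacity_bound
    {V : Type*} [Fintype V] [DecidableEq V]
    (G : SimpleGraph V) [DecidableRel G.Adj]
    (ρ : ℝ) (hρ0 : 0 < ρ) (hρχ : ρ ≤ 1 / (intDegG G : ℝ)) (hρ1 : ρ < 1)
    (ν : V → ℝ) (hν : ∃ μ ∈ capIntr G, ν = fun i => ρ * μ i)
    (lam : V → ℝ) (hlam : ∀ i, 0 < lam i)
    (hs : ∀ i, serviceRate G lam i = ν i) :
    ∀ i, lam i ≤ ρ / (1 - ρ) := by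
  intro i
  -- the interference degree is positive
  have hχ0 : 0 < intDegG G := by
    by_contra h
    push_neg at h
    have h0 : intDegG G = 0 := Nat.le_zero.mp h
    rw [h0] at hρχ
    simp at hρχ
    linarith
  have hχpos : (0:ℝ) < (intDegG G : ℝ) := by exact_mod_cast hχ0
  have hχR : (1:ℝ) ≤ (intDegG G : ℝ) := by exact_mod_cast hχ0
  have hρχ' : ρ * (intDegG G : ℝ) ≤ 1 := by
    have := (le_div_iff₀ hχpos).mp hρχ
    linarith
  obtain ⟨μ, ⟨hμ0, μ', hμ'mem, hμlt⟩, hνdef⟩ := hν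
  subst hνdef
  -- per-independent-set evaluation of linear functionals
  have hsum_ind : ∀ (a : ℝ) (s : Finset V),
      ∑ v ∈ s, ((if v = i then (1:ℝ) else 0)
        + (if v ∈ G.neighborFinset i then a else 0))
      = (if i ∈ s then (1:ℝ) else 0) + ((s ∩ G.neighborFinset i).card : ℝ) * a := by
    intro a s
    rw [Finset.sum_add_distrib, Finset.sum_ite_eq' s i (fun _ => (1:ℝ)),
      Finset.sum_ite_mem s (G.neighborFinset i) (fun _ => a),
      Finset.sum_const, nsmul_eq_mul]
  have hsum_x : ∀ (a : ℝ) (x : V → ℝ),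
      ∑ v : V, ((if v = i then (1:ℝ) else 0)
        + (if v ∈ G.neighborFinset i then a else 0)) * x v
      = x i + a * ∑ j ∈ G.neighborFinset i, x j := by
    intro a x
    simp only [add_mul, ite_mul, one_mul, zero_mul, Finset.sum_add_distrib]
    rw [Finset.sum_ite_eq' univ i x, if_pos (Finset.mem_univ i),
      Finset.sum_ite_mem univ (G.neighborFinset i) (fun v => a * x v),
      Finset.univ_inter, ← Finset.mul_sum]
  have hcap : ∀ s : Finset V, IsInd G s → i ∈ s → s ∩ G.neighborFinset i = ∅ := by
    intro s hsInd his
    rw [Finset.eq_empty_iff_forall_notMem]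
    intro j hj
    exact hsInd i his j (Finset.mem_of_mem_inter_left hj)
      ((SimpleGraph.mem_neighborFinset _ _ _).mp (Finset.mem_of_mem_inter_right hj))
  -- two convex-hull bounds
  have hb1 : μ' i + ρ * ∑ j ∈ G.neighborFinset i, μ' j ≤ 1 := by
    have := hull_linear_bound G
      (fun v => (if v = i then (1:ℝ) else 0)
        + (if v ∈ G.neighborFinset i then ρ else 0)) 1
      (by
        intro s hsInd
        rw [hsum_ind ρ s]
        by_cases his : i ∈ s
        · rw [if_pos his, hcap s hsInd his]
          simp
        · rw [if_neg his]
          have hc := card_inter_le G i s hsInd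
          have hcR : ((s ∩ G.neighborFinset i).card : ℝ) ≤ (intDegG G : ℝ) := by
            exact_mod_cast hc
          nlinarith) μ' hμ'mem
    rwa [hsum_x ρ μ'] at this
  have hb2 : μ' i + ∑ j ∈ G.neighborFinset i, μ' j ≤ (intDegG G : ℝ) := by
    have := hull_linear_bound G
      (fun v => (if v = i then (1:ℝ) else 0)
        + (if v ∈ G.neighborFinset i then (1:ℝ) else 0)) (intDegG G : ℝ)
      (by
        intro s hsInd
        rw [hsum_ind 1 s]
        by_cases his : i ∈ s
        · rw [if_pos his, hcap s hsInd his]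
          simpa using hχR
        · rw [if_neg his]
          have hc := card_inter_le G i s hsInd
          have hcR : ((s ∩ G.neighborFinset i).card : ℝ) ≤ (intDegG G : ℝ) := by
            exact_mod_cast hc
          simpa using hcR) μ' hμ'mem
    rw [hsum_x 1 μ'] at this
    linarith
  -- abbreviations
  set Sμ := ∑ j ∈ G.neighborFinset i, μ j with hSμdef
  set Sμ' := ∑ j ∈ G.neighborFinset i, μ' j with hSμ'def
  have hSS : Sμ ≤ Sμ' := Finset.sum_le_sum (fun j _ => (hμlt j).le)
  have hSμ0 : 0 ≤ Sμ := Finset.sum_nonneg (fun j _ => hμ0 j)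
  have hμi0 : 0 ≤ μ i := hμ0 i
  set q := myQ G lam i / myZ G lam with hqdef
  have hZpos := myZ_pos G lam hlam
  have hQpos := myQ_pos G lam hlam i
  have hqpos : 0 < q := div_pos hQpos hZpos
  have hq : ∀ j, myA G lam j / myZ G lam = ρ * μ j := by
    intro j
    rw [← serviceRate_eq]
    simpa using hs j
  have haq : lam i * q = ρ * μ i := by
    rw [hqdef, ← mul_div_assoc, ← myA_eq]
    exact hq i
  have hmain : 1 ≤ ρ * μ i + ρ * Sμ + q := by
    have h := myZ_le G lam hlam i
    have h2 := (div_le_div_iff_of_pos_right hZpos).mpr h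
    rw [div_self (ne_of_gt hZpos), add_div, add_div, Finset.sum_div] at h2
    simp only [hq] at h2
    rw [← Finset.mul_sum] at h2
    exact h2
  -- strict capacity bounds
  have hkey1 : μ i + ρ * Sμ < 1 := by
    have h1 : μ i + ρ * Sμ < μ' i + ρ * Sμ' := by
      have := hμlt i
      nlinarith
    linarith
  have hkey2 : ρ * μ i + ρ * Sμ < 1 := by
    have h1 : μ i + Sμ < μ' i + Sμ' := by
      have := hμlt i
      linarith
    nlinarith
  -- final algebra
  rw [le_div_iff₀ (by linarith : (0:ℝ) < 1 - ρ)]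
  by_contra hcon
  push_neg at hcon
  have hi' : lam i * (1 - (ρ * μ i) - (ρ * Sμ)) ≤ ρ * μ i := by
    calc lam i * (1 - (ρ * μ i) - (ρ * Sμ)) ≤ lam i * q :=
          mul_le_mul_of_nonneg_left (by linarith) (hlam i).le
      _ = ρ * μ i := haq
  have hC : ρ * μ i + ρ * (ρ * Sμ) < ρ := by nlinarith
  have t1 : (1 + lam i) * (ρ * μ i + ρ * (ρ * Sμ) - ρ) < 0 :=
    mul_neg_of_pos_of_neg (by linarith [hlam i]) (by linarith)
  have t2 : (1 - ρ * Sμ) * (ρ + lam i * ρ - lam i) < 0 := by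
    apply mul_neg_of_pos_of_neg
    · nlinarith
    · nlinarith
  nlinarith [hi', t1, t2]
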